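/- (Folded Gaussian smoothing certificate) Let ε₀ = |N(0, σ²)| be a folded Gaussian on ℝ_{≥0} and ε₁ = α + ε₀ for α > 0. Let h : X → [0,1]^C be measurable, φ a transform, g^ε(x) = E[h(φ(x,ε))], and suppose g^{ε₀}(x)_{k_A} ≥ p_A ≥ p_B ≥ max_{k ≠ k_A} g^{ε₀}(x)_k. If α < σ·(Φ⁻¹((1 + min{p_A, 1−p_B})/2) − Φ⁻¹(3/4)), then g^{ε₁}(x)_{k_A} > max_{k ≠ k_A} g^{ε₁}(x)_k. -/

import Mathlib

open MeasureTheory ProbabilityTheory Real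
open scoped NNReal ENNReal

/-- The standard normal CDF. -/
noncomputable def stdNormalCDF : ℝ → ℝ := fun x => cdf (gaussianReal 0 1) x

/-- Generalized inverse of the standard normal CDF. -/
noncomputable def stdNormalCDFInv (p : ℝ) : ℝ := sInf {x : ℝ | p ≤ stdNormalCDF x}

/-- The folded Gaussian distribution `|N(0, σ²)|`, as a measure on `ℝ`. -/
noncomputable def foldedGaussianMeas (σ : ℝ) : Measure ℝ :=
  volume.withDensity fun z =>
    ENNReal.ofReal
      (if 0 ≤ z then (2 / (Real.sqrt (2 * π) * σ)) * Real.exp (-(z ^ 2) / (2 * σ ^ 2)) else 0)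

lemma stdPDF_integrable : Integrable (gaussianPDFReal 0 1) volume :=
  integrable_gaussianPDFReal 0 1

lemma Phi_eq (b : ℝ) : stdNormalCDF b = ∫ x in Set.Iic b, gaussianPDFReal 0 1 x := by
  have h1 : (gaussianReal 0 1) (Set.Iic b)
      = ENNReal.ofReal (∫ x in Set.Iic b, gaussianPDFReal 0 1 x) :=
    gaussianReal_apply_eq_integral 0 one_ne_zero _
  rw [stdNormalCDF, cdf_eq_real, measureReal_def, h1, ENNReal.toReal_ofReal]
  exact setIntegral_nonneg measurableSet_Iic fun x _ => gaussianPDFReal_nonneg 0 1 x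

lemma Phi_diff (a b : ℝ) : stdNormalCDF b - stdNormalCDF a = ∫ x in a..b, gaussianPDFReal 0 1 x := by
  rw [Phi_eq, Phi_eq]
  rw [intervalIntegral.integral_Iic_sub_Iic stdPDF_integrable.integrableOn
    stdPDF_integrable.integrableOn]

lemma Phi_strictMono : StrictMono stdNormalCDF := by
  intro a b hab
  have h := Phi_diff a b
  have hpos : 0 < ∫ x in a..b, gaussianPDFReal 0 1 x :=
    intervalIntegral.intervalIntegral_pos_of_pos
      (stdPDF_integrable.intervalIntegrable) (fun x => gaussianPDFReal_pos 0 1 x one_ne_zero) hab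
  linarith

lemma Phi_continuous : Continuous stdNormalCDF := by
  have h : ∀ b, stdNormalCDF b = stdNormalCDF 0 + ∫ x in (0:ℝ)..b, gaussianPDFReal 0 1 x := by
    intro b; have := Phi_diff 0 b; linarith
  have hc : Continuous fun b => stdNormalCDF 0 + ∫ x in (0:ℝ)..b, gaussianPDFReal 0 1 x :=
    continuous_const.add (intervalIntegral.continuous_primitive
      (fun a b => stdPDF_integrable.intervalIntegrable) 0)
  exact (funext h : stdNormalCDF = _) ▸ hc

lemma Phi_lt_one (x : ℝ) : stdNormalCDF x < 1 :=
  lt_of_lt_of_le (Phi_strictMono (lt_add_one x)) (cdf_le_one _ _)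

lemma Phi_pos (x : ℝ) : 0 < stdNormalCDF x :=
  lt_of_le_of_lt (cdf_nonneg _ _) (Phi_strictMono (sub_one_lt x))

lemma Phi_tendsto_atTop : Filter.Tendsto stdNormalCDF Filter.atTop (nhds 1) :=
  tendsto_cdf_atTop _

lemma Phi_tendsto_atBot : Filter.Tendsto stdNormalCDF Filter.atBot (nhds 0) :=
  tendsto_cdf_atBot _

lemma Phi_zero : stdNormalCDF 0 = 1 / 2 := by
  have heven : ∀ x : ℝ, gaussianPDFReal 0 1 (-x) = gaussianPDFReal 0 1 x := by
    intro x; simp [gaussianPDFReal, neg_sq]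
  have h1 : (∫ x in Set.Iic (0:ℝ), gaussianPDFReal 0 1 x)
      = ∫ x in Set.Ioi (0:ℝ), gaussianPDFReal 0 1 x := by
    have := integral_comp_neg_Iic (0:ℝ) (gaussianPDFReal 0 1)
    simp only [heven, neg_zero] at this
    exact this
  have h3 : (∫ x in Set.Iic (0:ℝ), gaussianPDFReal 0 1 x)
      + ∫ x in Set.Ioi (0:ℝ), gaussianPDFReal 0 1 x = 1 := by
    rw [intervalIntegral.integral_Iic_add_Ioi stdPDF_integrable.integrableOn stdPDF_integrable.integrableOn]
    exact integral_gaussianPDFReal_eq_one 0 one_ne_zero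
  rw [Phi_eq]
  linarith [h1, h3]

lemma PhiInvSet_nonempty {p : ℝ} (h1 : p < 1) : {x : ℝ | p ≤ stdNormalCDF x}.Nonempty :=
  (Phi_tendsto_atTop.eventually (eventually_ge_nhds h1)).exists

lemma PhiInvSet_bddBelow {p : ℝ} (h0 : 0 < p) : BddBelow {x : ℝ | p ≤ stdNormalCDF x} := by
  obtain ⟨x₀, hx₀⟩ := (Phi_tendsto_atBot.eventually (eventually_lt_nhds h0)).exists
  refine ⟨x₀, fun y hy => le_of_not_gt fun hlt => ?_⟩
  exact absurd hy (not_le.2 (lt_of_le_of_lt (Phi_strictMono.monotone hlt.le) hx₀))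

lemma PhiInv_spec {p : ℝ} (h0 : 0 < p) (h1 : p < 1) : stdNormalCDF (stdNormalCDFInv p) = p := by
  set S := {x : ℝ | p ≤ stdNormalCDF x} with hS
  have hclosed : IsClosed S := isClosed_le continuous_const Phi_continuous
  have hmem : sInf S ∈ S := hclosed.csInf_mem (PhiInvSet_nonempty h1) (PhiInvSet_bddBelow h0)
  refine le_antisymm ?_ hmem
  have hlt : ∀ x < sInf S, stdNormalCDF x < p := fun x hx =>
    lt_of_not_ge fun hp => absurd (csInf_le (PhiInvSet_bddBelow h0) hp) (not_le.2 hx)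
  have : Filter.Tendsto stdNormalCDF (nhdsWithin (sInf S) (Set.Iio (sInf S)))
      (nhds (stdNormalCDF (sInf S))) :=
    Phi_continuous.continuousAt.tendsto.mono_left nhdsWithin_le_nhds
  exact le_of_tendsto this (Filter.eventually_iff_exists_mem.2
    ⟨Set.Iio (sInf S), self_mem_nhdsWithin, fun x hx => (hlt x hx).le⟩)

lemma PhiInv_mono {p q : ℝ} (h0 : 0 < p) (hpq : p ≤ q) (h1 : q < 1) :
    stdNormalCDFInv p ≤ stdNormalCDFInv q :=
  csInf_le_csInf (PhiInvSet_bddBelow h0) (PhiInvSet_nonempty h1)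
    (fun x hx => le_trans hpq hx)

lemma PhiInv_34_pos : 0 < stdNormalCDFInv (3/4) := by
  by_contra hle
  push_neg at hle
  have := Phi_strictMono.monotone hle
  rw [PhiInv_spec (by norm_num) (by norm_num), Phi_zero] at this
  norm_num at this


noncomputable def fexp (σ z : ℝ) : ℝ :=
  (2 / (Real.sqrt (2 * π) * σ)) * Real.exp (-(z ^ 2) / (2 * σ ^ 2))

noncomputable def fpdf (σ z : ℝ) : ℝ := if 0 ≤ z then fexp σ z else 0

lemma fexp_nonneg {σ : ℝ} (hσ : 0 < σ) (z : ℝ) : 0 ≤ fexp σ z := by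
  unfold fexp
  have h2π : (0:ℝ) < Real.sqrt (2 * π) := Real.sqrt_pos.2 (by positivity)
  positivity

lemma fpdf_nonneg {σ : ℝ} (hσ : 0 < σ) (z : ℝ) : 0 ≤ fpdf σ z := by
  unfold fpdf; split
  · exact fexp_nonneg hσ z
  · exact le_refl _

lemma fexp_meas (σ : ℝ) : Measurable (fexp σ) := by
  unfold fexp; fun_prop

lemma fpdf_meas (σ : ℝ) : Measurable (fpdf σ) :=
  Measurable.ite (measurableSet_le measurable_const measurable_id) (fexp_meas σ) measurable_const

lemma fexp_eq {σ : ℝ} (hσ : 0 < σ) :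
    fexp σ = fun z => (2 / (Real.sqrt (2 * π) * σ)) * Real.exp (-(1/(2*σ^2)) * z ^ 2) := by
  funext z; unfold fexp; congr 1; rw [neg_div, neg_mul]; congr 1; field_simp

lemma fexp_integrable {σ : ℝ} (hσ : 0 < σ) : Integrable (fexp σ) := by
  rw [fexp_eq hσ]
  exact (integrable_exp_neg_mul_sq (by positivity)).const_mul _

lemma fpdf_eq_indicator (σ : ℝ) : fpdf σ = Set.indicator (Set.Ici 0) (fexp σ) := by
  funext z
  rw [Set.indicator_apply]
  simp only [Set.mem_Ici]
  rfl

lemma fpdf_integrable {σ : ℝ} (hσ : 0 < σ) : Integrable (fpdf σ) := by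
  rw [fpdf_eq_indicator]
  exact (fexp_integrable hσ).indicator measurableSet_Ici


lemma foldedGaussianMeas_eq (σ : ℝ) :
    foldedGaussianMeas σ = volume.withDensity fun z => ENNReal.ofReal (fpdf σ z) := rfl

lemma folded_integral_eq {σ : ℝ} (hσ : 0 < σ) (G : ℝ → ℝ) (hG : Measurable G) :
    ∫ z, G z ∂(foldedGaussianMeas σ) = ∫ z, G z * fpdf σ z := by
  rw [foldedGaussianMeas_eq]
  have hd : (fun z => ENNReal.ofReal (fpdf σ z))
      = fun z => ((fun w => (fpdf σ w).toNNReal) z : ℝ≥0∞) := rfl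
  rw [hd, integral_withDensity_eq_integral_smul
    (f := fun w => (fpdf σ w).toNNReal) ((fpdf_meas σ).real_toNNReal) G]
  congr 1; funext z
  rw [NNReal.smul_def, smul_eq_mul, Real.coe_toNNReal _ (fpdf_nonneg hσ z), mul_comm]

lemma fexp_interval {σ : ℝ} (hσ : 0 < σ) (u : ℝ) :
    ∫ z in (0:ℝ)..u, fexp σ z = 2 * stdNormalCDF (u / σ) - 1 := by
  have hcomp : ∀ z : ℝ, fexp σ z = fexp σ (σ * (z / σ)) := by
    intro z; rw [mul_div_cancel₀ _ hσ.ne']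
  have hptw : ∀ y : ℝ, σ * fexp σ (σ * y) = 2 * gaussianPDFReal 0 1 y := by
    intro y
    unfold fexp gaussianPDFReal
    have h2π : (0:ℝ) < Real.sqrt (2 * π) := Real.sqrt_pos.2 (by positivity)
    have hexp : -((σ * y) ^ 2) / (2 * σ ^ 2) = -(y - 0) ^ 2 / (2 * (1:NNReal)) := by
      push_cast; field_simp; ring
    rw [hexp]
    have hco : (2 * π * ((1:NNReal):ℝ)) = 2 * π := by push_cast; ring
    rw [hco]
    field_simp
  calc ∫ z in (0:ℝ)..u, fexp σ z = ∫ z in (0:ℝ)..u, fexp σ (σ * (z / σ)) := by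
        simp_rw [← hcomp]
    _ = σ • ∫ y in (0/σ)..(u/σ), fexp σ (σ * y) := by
        rw [intervalIntegral.integral_comp_div (fun y => fexp σ (σ * y)) hσ.ne']
    _ = ∫ y in (0:ℝ)..(u/σ), σ * fexp σ (σ * y) := by
        rw [zero_div, smul_eq_mul, ← intervalIntegral.integral_const_mul]
    _ = ∫ y in (0:ℝ)..(u/σ), 2 * gaussianPDFReal 0 1 y := by simp_rw [hptw]
    _ = 2 * (stdNormalCDF (u/σ) - stdNormalCDF 0) := by
        rw [intervalIntegral.integral_const_mul, ← Phi_diff]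
    _ = 2 * stdNormalCDF (u / σ) - 1 := by rw [Phi_zero]; ring

lemma fpdf_Iic {σ : ℝ} (hσ : 0 < σ) {u : ℝ} (hu : 0 ≤ u) :
    ∫ z in Set.Iic u, fpdf σ z = 2 * stdNormalCDF (u / σ) - 1 := by
  rw [fpdf_eq_indicator, setIntegral_indicator measurableSet_Ici,
    Set.inter_comm, Set.Ici_inter_Iic, integral_Icc_eq_integral_Ioc,
    ← intervalIntegral.integral_of_le hu, fexp_interval hσ]

lemma fpdf_total {σ : ℝ} (hσ : 0 < σ) : ∫ z, fpdf σ z = 1 := by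
  rw [fpdf_eq_indicator, integral_indicator measurableSet_Ici,
    integral_Ici_eq_integral_Ioi]
  have hA : Filter.Tendsto (fun b => ∫ z in (0:ℝ)..b, fexp σ z) Filter.atTop
      (nhds (∫ z in Set.Ioi (0:ℝ), fexp σ z)) :=
    intervalIntegral_tendsto_integral_Ioi 0 (fexp_integrable hσ).integrableOn Filter.tendsto_id
  have hB : Filter.Tendsto (fun b => ∫ z in (0:ℝ)..b, fexp σ z) Filter.atTop (nhds 1) := by
    have h1 : Filter.Tendsto (fun b : ℝ => 2 * stdNormalCDF (b / σ) - 1) Filter.atTop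
        (nhds (2 * 1 - 1)) :=
      (((Phi_tendsto_atTop.comp (Filter.tendsto_id.atTop_div_const hσ)).const_mul 2).sub_const 1)
    have h2 : (2:ℝ) * 1 - 1 = 1 := by norm_num
    rw [h2] at h1
    exact h1.congr (fun b => (fexp_interval hσ b).symm)
  exact tendsto_nhds_unique hA hB

/-! ### Neyman–Pearson style inequality -/

lemma np_ineq {f g : ℝ → ℝ} (t ρ : ℝ) (hρ : 0 ≤ ρ)
    (hfi : Integrable f) (hgi : Integrable g) (hfm : Measurable f) (hgm : Measurable g)
    (hf0 : ∀ z, 0 ≤ f z) (hg0 : ∀ z, 0 ≤ g z)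
    (hle : ∀ z, z ≤ t → g z ≤ ρ * f z) (hge : ∀ z, t ≤ z → ρ * f z ≤ g z)
    {H : ℝ → ℝ} (hHm : Measurable H) (hH01 : ∀ z, H z ∈ Set.Icc (0:ℝ) 1) :
    (∫ z in Set.Iic t, g z) + ρ * ((∫ z, H z * f z) - ∫ z in Set.Iic t, f z)
      ≤ ∫ z, H z * g z := by
  set χ : ℝ → ℝ := Set.indicator (Set.Iic t) (fun _ => 1) with hχ
  have hmul : ∀ (F : ℝ → ℝ), (fun z => χ z * F z) = Set.indicator (Set.Iic t) F := by
    intro F; funext z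
    by_cases hz : z ∈ Set.Iic t <;> simp [hχ, Set.indicator_apply, hz]
  have hHf : Integrable (fun z => H z * f z) :=
    hfi.mono' ((hHm.mul hfm).aestronglyMeasurable) (ae_of_all _ fun z => by
      rw [Real.norm_eq_abs, abs_mul, abs_of_nonneg (hH01 z).1, abs_of_nonneg (hf0 z)]
      exact mul_le_of_le_one_left (hf0 z) (hH01 z).2)
  have hHg : Integrable (fun z => H z * g z) :=
    hgi.mono' ((hHm.mul hgm).aestronglyMeasurable) (ae_of_all _ fun z => by
      rw [Real.norm_eq_abs, abs_mul, abs_of_nonneg (hH01 z).1, abs_of_nonneg (hg0 z)]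
      exact mul_le_of_le_one_left (hg0 z) (hH01 z).2)
  have hχf : Integrable (fun z => χ z * f z) := by
    rw [hmul]; exact hfi.indicator measurableSet_Iic
  have hχg : Integrable (fun z => χ z * g z) := by
    rw [hmul]; exact hgi.indicator measurableSet_Iic
  have key : 0 ≤ ∫ z, (H z - χ z) * (g z - ρ * f z) := by
    refine integral_nonneg fun z => ?_
    show (0:ℝ) ≤ (H z - χ z) * (g z - ρ * f z)
    by_cases hz : z ≤ t
    · have h1 : H z - χ z ≤ 0 := by
        have : χ z = 1 := by simp [hχ, Set.indicator_apply, hz]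
        rw [this]; linarith [(hH01 z).2]
      have h2 : g z - ρ * f z ≤ 0 := sub_nonpos.2 (hle z hz)
      have := mul_nonneg (neg_nonneg.2 h1) (neg_nonneg.2 h2)
      rwa [neg_mul_neg] at this
    · have h1 : 0 ≤ H z - χ z := by
        have : χ z = 0 := by simp [hχ, Set.indicator_apply, hz]
        rw [this]; simpa using (hH01 z).1
      have h2 : 0 ≤ g z - ρ * f z := sub_nonneg.2 (hge z (le_of_not_ge hz))
      exact mul_nonneg h1 h2
  have expand : (fun z => (H z - χ z) * (g z - ρ * f z))
      = fun z => (H z * g z - χ z * g z) - (ρ * (H z * f z) - ρ * (χ z * f z)) := by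
    funext z; ring
  rw [expand] at key
  have i1 : Integrable (fun z => H z * g z - χ z * g z) := hHg.sub hχg
  have i2 : Integrable (fun z => ρ * (H z * f z) - ρ * (χ z * f z)) :=
    (hHf.const_mul ρ).sub (hχf.const_mul ρ)
  rw [integral_sub i1 i2, integral_sub hHg hχg,
    integral_sub (hHf.const_mul ρ) (hχf.const_mul ρ),
    integral_const_mul, integral_const_mul] at key
  have e1 : ∫ z, χ z * g z = ∫ z in Set.Iic t, g z := by
    rw [hmul]; exact integral_indicator measurableSet_Iic
  have e2 : ∫ z, χ z * f z = ∫ z in Set.Iic t, f z := by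
    rw [hmul]; exact integral_indicator measurableSet_Iic
  rw [e1, e2] at key
  linarith [key]

lemma fpdf_of_nonneg {σ z : ℝ} (h : 0 ≤ z) : fpdf σ z = fexp σ z := if_pos h
lemma fpdf_of_neg {σ z : ℝ} (h : z < 0) : fpdf σ z = 0 := if_neg (not_le.2 h)

lemma fpdf_ratio_le {σ α t : ℝ} (hσ : 0 < σ) (hα : 0 < α) (htα : α ≤ t) :
    ∀ z, z ≤ t → fpdf σ (z - α) ≤ Real.exp ((2*α*t - α^2) / (2*σ^2)) * fpdf σ z := by
  intro z hz
  by_cases h1 : 0 ≤ z - α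
  · have h2 : 0 ≤ z := by linarith
    rw [fpdf_of_nonneg h1, fpdf_of_nonneg h2]
    unfold fexp
    rw [mul_left_comm, ← Real.exp_add, ← add_div]
    have hsq : (0:ℝ) < Real.sqrt (2 * π) := Real.sqrt_pos.2 (by positivity)
    refine mul_le_mul_of_nonneg_left (Real.exp_le_exp.2 ?_) (by positivity)
    have h2σ : (0:ℝ) < 2 * σ ^ 2 := by positivity
    rw [div_le_div_iff_of_pos_right h2σ]
    nlinarith
  · rw [fpdf_of_neg (lt_of_not_ge h1)]
    exact mul_nonneg (Real.exp_pos _).le (fpdf_nonneg hσ z)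

lemma fpdf_ratio_ge {σ α t : ℝ} (hσ : 0 < σ) (hα : 0 < α) (htα : α ≤ t) :
    ∀ z, t ≤ z → Real.exp ((2*α*t - α^2) / (2*σ^2)) * fpdf σ z ≤ fpdf σ (z - α) := by
  intro z hz
  have h1 : 0 ≤ z - α := by linarith
  have h2 : 0 ≤ z := by linarith
  rw [fpdf_of_nonneg h1, fpdf_of_nonneg h2]
  unfold fexp
  rw [mul_left_comm, ← Real.exp_add, ← add_div]
  have hsq : (0:ℝ) < Real.sqrt (2 * π) := Real.sqrt_pos.2 (by positivity)
  refine mul_le_mul_of_nonneg_left (Real.exp_le_exp.2 ?_) (by positivity)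
  have h2σ : (0:ℝ) < 2 * σ ^ 2 := by positivity
  rw [div_le_div_iff_of_pos_right h2σ]
  nlinarith

/-- folded Gaussian smoothing certificate. -/
theorem stmt_10 {X : Type*} [MeasurableSpace X] {C : ℕ} (hC : 2 ≤ C)
    (σ : ℝ) (hσ : 0 < σ)
    (h : X → Fin C → ℝ) (hhb : ∀ y k, h y k ∈ Set.Icc (0 : ℝ) 1)
    (φ : X → ℝ → X) (x : X) (α : ℝ) (hα : 0 < α)
    (hmeas : ∀ k, Measurable fun z : ℝ => h (φ x z) k)
    (g₀ g₁ : Fin C → ℝ)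
    (hg₀ : g₀ = fun k => ∫ z, h (φ x z) k ∂(foldedGaussianMeas σ))
    (hg₁ : g₁ = fun k => ∫ z, h (φ x (α + z)) k ∂(foldedGaussianMeas σ))
    (kA : Fin C) (pA pB : ℝ)
    (hpB0 : 0 ≤ pB) (hpA1 : pA ≤ 1) (hAB : pB ≤ pA)
    (hconfA : pA ≤ g₀ kA) (hconfB : ∀ k, k ≠ kA → g₀ k ≤ pB)
    (hrad : α < σ * (stdNormalCDFInv ((1 + min pA (1 - pB)) / 2) -
      stdNormalCDFInv (3 / 4))) :
    ∀ k, k ≠ kA → g₁ k < g₁ kA := by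
  intro k hk
  set m := min pA (1 - pB) with hm
  set c := stdNormalCDFInv ((1 + m) / 2) with hc
  set d := stdNormalCDFInv (3 / 4) with hd
  have hd0 : 0 < d := PhiInv_34_pos
  have hcd : d < c := by nlinarith [hrad, hα, hσ]
  have hm0 : 0 ≤ m := le_min (le_trans hpB0 hAB) (by linarith)
  have hmA : m ≤ pA := min_le_left _ _
  have hmB : m ≤ 1 - pB := min_le_right _ _
  have hm1 : m < 1 := by
    by_contra hge
    push_neg at hge
    have hmeq : m = 1 := le_antisymm (hmA.trans hpA1) hge
    have hempty : {x : ℝ | (1 + m) / 2 ≤ stdNormalCDF x} = ∅ := by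
      refine Set.eq_empty_iff_forall_notMem.2 fun y hy => ?_
      rw [Set.mem_setOf_eq, hmeq] at hy
      have := Phi_lt_one y
      linarith
    have hc0 : c = 0 := by rw [hc, stdNormalCDFInv, hempty, Real.sInf_empty]
    linarith
  have hp2a : 0 < (1 + m) / 2 := by linarith
  have hp2b : (1 + m) / 2 < 1 := by linarith
  have hΦc : stdNormalCDF c = (1 + m) / 2 := PhiInv_spec hp2a hp2b
  have hΦd : stdNormalCDF d = 3 / 4 := PhiInv_spec (by norm_num) (by norm_num)
  set t := σ * c with ht
  have hαt : α < t - σ * d := by nlinarith [hrad]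
  have htα : α ≤ t := by nlinarith
  have ht0 : 0 ≤ t := by nlinarith
  set ρ := Real.exp ((2 * α * t - α ^ 2) / (2 * σ ^ 2)) with hρdef
  have hρ0 : 0 ≤ ρ := (Real.exp_pos _).le
  -- densities
  set f : ℝ → ℝ := fpdf σ with hfdef
  set g : ℝ → ℝ := fun z => fpdf σ (z - α) with hgdef
  have hfi : Integrable f := fpdf_integrable hσ
  have hgi : Integrable g := (fpdf_integrable hσ).comp_sub_right α
  have hfm : Measurable f := fpdf_meas σ
  have hgm : Measurable g := (fpdf_meas σ).comp (measurable_id.sub_const α)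
  have hf0 : ∀ z, 0 ≤ f z := fpdf_nonneg hσ
  have hg0 : ∀ z, 0 ≤ g z := fun z => fpdf_nonneg hσ _
  have hle : ∀ z, z ≤ t → g z ≤ ρ * f z := fpdf_ratio_le hσ hα htα
  have hge : ∀ z, t ≤ z → ρ * f z ≤ g z := fpdf_ratio_ge hσ hα htα
  -- set integrals
  have hFt : ∫ z in Set.Iic t, f z = m := by
    rw [hfdef, fpdf_Iic hσ ht0, ht, mul_comm σ c, mul_div_assoc, div_self hσ.ne', mul_one, hΦc]
    ring
  have hFα : ∫ z in Set.Iic (t - α), f z = 2 * stdNormalCDF ((t - α) / σ) - 1 :=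
    fpdf_Iic hσ (by linarith)
  have hFα_gt : 1 / 2 < ∫ z in Set.Iic (t - α), f z := by
    rw [hFα]
    have hdlt : d < (t - α) / σ := by
      rw [lt_div_iff₀ hσ]; nlinarith
    have := Phi_strictMono hdlt
    rw [hΦd] at this
    linarith
  have hGt : ∫ z in Set.Iic t, g z = ∫ z in Set.Iic (t - α), f z := by
    calc ∫ z in Set.Iic t, g z = ∫ z, Set.indicator (Set.Iic t) g z :=
          (integral_indicator measurableSet_Iic).symm
      _ = ∫ z, Set.indicator (Set.Iic t) g (α + z) :=
          (integral_add_left_eq_self (Set.indicator (Set.Iic t) g) α).symm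
      _ = ∫ z, Set.indicator (Set.Iic (t - α)) f z := by
          congr 1; funext z
          by_cases hz : z ≤ t - α
          · rw [Set.indicator_of_mem (by simpa using (by linarith : α + z ≤ t)),
              Set.indicator_of_mem (by simpa using hz)]
            simp [hgdef, hfdef]
          · rw [Set.indicator_of_notMem (by simpa using (by linarith : ¬ α + z ≤ t)),
              Set.indicator_of_notMem (by simpa using hz)]
      _ = ∫ z in Set.Iic (t - α), f z := integral_indicator measurableSet_Iic
  have hftot : ∫ z, f z = 1 := fpdf_total hσ
  have hgtot : ∫ z, g z = 1 := by
    rw [hgdef]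
    rw [integral_sub_right_eq_self (fpdf σ) α]
    exact fpdf_total hσ
  -- expectations
  have hg₀e : ∀ j, g₀ j = ∫ z, h (φ x z) j * f z := by
    intro j; rw [hg₀]; exact folded_integral_eq hσ _ (hmeas j)
  have hg₁e : ∀ j, g₁ j = ∫ z, h (φ x z) j * g z := by
    intro j
    rw [hg₁]
    dsimp only
    have h1 : (∫ z, h (φ x (α + z)) j ∂(foldedGaussianMeas σ))
        = ∫ z, h (φ x (α + z)) j * f z :=
      folded_integral_eq hσ _ ((hmeas j).comp (measurable_const_add α))
    rw [h1]
    have h2 : (fun z => h (φ x (α + z)) j * f z)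
        = fun z => (fun w => h (φ x w) j * g w) (α + z) := by
      funext z
      simp only [hgdef, hfdef, add_sub_cancel_left]
    rw [h2, integral_add_left_eq_self (fun w => h (φ x w) j * g w) α]
  -- lower bound for class kA
  have hnpA := np_ineq t ρ hρ0 hfi hgi hfm hgm hf0 hg0 hle hge (hmeas kA)
    (fun z => hhb _ _)
  have hlower : (∫ z in Set.Iic (t - α), f z) ≤ g₁ kA := by
    rw [hg₁e kA]
    have hA0 : m ≤ ∫ z, h (φ x z) kA * f z := by rw [← hg₀e kA]; linarith
    have : 0 ≤ ρ * ((∫ z, h (φ x z) kA * f z) - ∫ z in Set.Iic t, f z) := by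
      apply mul_nonneg hρ0; rw [hFt]; linarith
    rw [hGt] at hnpA
    linarith
  -- upper bound for class k
  have hnpB := np_ineq t ρ hρ0 hfi hgi hfm hgm hf0 hg0 hle hge (H := fun z => 1 - h (φ x z) k)
    (measurable_const.sub (hmeas k) : Measurable fun z => 1 - h (φ x z) k)
    (fun z => ⟨by linarith [(hhb (φ x z) k).2], by linarith [(hhb (φ x z) k).1]⟩)
  have hupper : g₁ k ≤ 1 - ∫ z in Set.Iic (t - α), f z := by
    have hintHf : Integrable (fun z => h (φ x z) k * f z) :=
      hfi.mono' (((hmeas k).mul hfm).aestronglyMeasurable) (ae_of_all _ fun z => by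
        rw [Real.norm_eq_abs, abs_mul, abs_of_nonneg (hhb (φ x z) k).1,
          abs_of_nonneg (hf0 z)]
        exact mul_le_of_le_one_left (hf0 z) (hhb (φ x z) k).2)
    have hintHg : Integrable (fun z => h (φ x z) k * g z) :=
      hgi.mono' (((hmeas k).mul hgm).aestronglyMeasurable) (ae_of_all _ fun z => by
        rw [Real.norm_eq_abs, abs_mul, abs_of_nonneg (hhb (φ x z) k).1,
          abs_of_nonneg (hg0 z)]
        exact mul_le_of_le_one_left (hg0 z) (hhb (φ x z) k).2)
    have e1 : (∫ z, (1 - h (φ x z) k) * f z) = 1 - ∫ z, h (φ x z) k * f z := by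
      have : (fun z => (1 - h (φ x z) k) * f z)
          = fun z => f z - h (φ x z) k * f z := by funext z; ring
      rw [this, integral_sub hfi hintHf, hftot]
    have e2 : (∫ z, (1 - h (φ x z) k) * g z) = 1 - ∫ z, h (φ x z) k * g z := by
      have : (fun z => (1 - h (φ x z) k) * g z)
          = fun z => g z - h (φ x z) k * g z := by funext z; ring
      rw [this, integral_sub hgi hintHg, hgtot]
    rw [e1, e2, hGt, hFt] at hnpB
    have hBk : (∫ z, h (φ x z) k * f z) ≤ pB := by rw [← hg₀e k]; exact hconfB k hk
    have hρterm : 0 ≤ ρ * (1 - (∫ z, h (φ x z) k * f z) - m) := by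
      apply mul_nonneg hρ0; linarith
    rw [hg₁e k]
    linarith
  linarith
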